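/- Let t¹ < t² < t³, and let ν₁ be a Borel probability on C([t¹,t²];𝕋^d) × U and ν₂ a Borel probability on C([t²,t³];𝕋^d) × U such that the pushforwards of ν₁ and ν₂ under (x(·),u) ↦ (x(t²),u) coincide (call it μ). Define the concatenation ν₁⊙ν₂ on C([t¹,t³];𝕋^d) × U via ∫φ d(ν₁⊙ν₂) = ∫∫ φ(a₁⊙a₂) ν₂(da₂ | x₁(t²),u₁) ν₁(da₁), using the disintegration of ν₂ over μ, where a₁⊙a₂ pastes the two trajectories. Then ν₁⊙ν₂ is a well-defined Borel probability, and its pushforward under (x(·),u) ↦ (x(t),u) equals that of ν₁ for t ∈ [t¹,t²] and that of ν₂ for t ∈ [t²,t³]. -/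

import Mathlib

noncomputable def intLattice (d : ℕ) : AddSubgroup (EuclideanSpace ℝ (Fin d)) where
  carrier := {v | ∀ i, ∃ n : ℤ, v i = (n : ℝ)}
  zero_mem' := fun i => ⟨0, by simp⟩
  add_mem' := by
    intro a b ha hb i
    obtain ⟨n, hn⟩ := ha i
    obtain ⟨m, hm⟩ := hb i
    exact ⟨n + m, by simp [hn, hm]⟩
  neg_mem' := by
    intro a ha i
    obtain ⟨n, hn⟩ := ha i
    exact ⟨-n, by simp [hn]⟩

instance intLattice_isClosed (d : ℕ) :
    IsClosed ((intLattice d : Set (EuclideanSpace ℝ (Fin d)))) := by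
  have h : (intLattice d : Set (EuclideanSpace ℝ (Fin d))) =
      ⋂ i, (fun v : EuclideanSpace ℝ (Fin d) => v i) ⁻¹' (Set.range ((↑) : ℤ → ℝ)) := by
    ext v
    simp only [Set.mem_iInter, Set.mem_preimage, Set.mem_range]
    constructor
    · intro hv i; obtain ⟨n, hn⟩ := hv i; exact ⟨n, hn.symm⟩
    · intro hv i; obtain ⟨n, hn⟩ := hv i; exact ⟨n, hn.symm⟩
  rw [h]
  exact isClosed_iInter fun i =>
    (Int.isClosedEmbedding_coe_real.isClosed_range).preimage
      ((continuous_apply i).comp (PiLp.continuous_ofLp (p := 2) (β := fun _ : Fin d => ℝ)))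

/-- The `d`-dimensional torus `𝕋^d = ℝ^d/ℤ^d`, with the quotient (flat) metric. -/
abbrev Torus (d : ℕ) := EuclideanSpace ℝ (Fin d) ⧸ intLattice d

noncomputable instance (d : ℕ) : MeasurableSpace (Torus d) := borel _
instance (d : ℕ) : BorelSpace (Torus d) := ⟨rfl⟩

open MeasureTheory

noncomputable instance (d : ℕ) (a b : ℝ) :
    MeasurableSpace C(Set.Icc a b, Torus d) := borel _
instance (d : ℕ) (a b : ℝ) : BorelSpace C(Set.Icc a b, Torus d) := ⟨rfl⟩

/-- Restriction of a continuous path along an inclusion of intervals. -/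
def restrMap {T : Type*} [TopologicalSpace T] {a b a' b' : ℝ}
    (h : Set.Icc a b ⊆ Set.Icc a' b') (f : C(Set.Icc a' b', T)) : C(Set.Icc a b, T) :=
  f.comp ⟨Set.inclusion h, continuous_inclusion h⟩

set_option maxHeartbeats 2000000
set_option synthInstance.maxHeartbeats 1000000

open MeasureTheory ProbabilityTheory Set

section Glue

variable {T : Type*} [TopologicalSpace T] [AddCommGroup T] [IsTopologicalAddGroup T]
variable {t1 t2 t3 : ℝ} (h1 : t1 ≤ t2) (h2 : t2 ≤ t3)

/-- clamp from `[t1,t3]` to `[t1,t2]` -/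
def clamp1 (h1 : t1 ≤ t2) (t : Icc t1 t3) : Icc t1 t2 :=
  ⟨min t t2, ⟨le_min t.2.1 h1, min_le_right _ _⟩⟩

/-- clamp from `[t1,t3]` to `[t2,t3]` -/
def clamp2 (h2 : t2 ≤ t3) (t : Icc t1 t3) : Icc t2 t3 :=
  ⟨max t t2, ⟨le_max_right _ _, max_le t.2.2 h2⟩⟩

lemma continuous_clamp1 : Continuous (clamp1 (t3 := t3) h1) :=
  Continuous.subtype_mk (continuous_subtype_val.min continuous_const) _

lemma continuous_clamp2 : Continuous (clamp2 (t1 := t1) h2) :=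
  Continuous.subtype_mk (continuous_subtype_val.max continuous_const) _

noncomputable def glueFn (x₁ : C(Icc t1 t2, T)) (x₂ : C(Icc t2 t3, T)) :
    C(Icc t1 t3, T) where
  toFun t := if (t : ℝ) ≤ t2 then x₁ (clamp1 h1 t)
    else x₂ (clamp2 h2 t) + (x₁ ⟨t2, right_mem_Icc.mpr h1⟩ - x₂ ⟨t2, left_mem_Icc.mpr h2⟩)
  continuous_toFun := by
    refine Continuous.if_le ?_ ?_ continuous_subtype_val continuous_const ?_
    · exact x₁.continuous.comp (continuous_clamp1 h1)
    · exact ((x₂.continuous.comp (continuous_clamp2 h2)).add continuous_const)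
    · intro t ht
      have e1 : clamp1 h1 t = ⟨t2, right_mem_Icc.mpr h1⟩ := Subtype.ext (by simp [clamp1, ht])
      have e2 : clamp2 h2 t = ⟨t2, left_mem_Icc.mpr h2⟩ := Subtype.ext (by simp [clamp2, ht])
      rw [e1, e2]
      abel

lemma continuous_glueFn :
    Continuous (fun q : C(Icc t1 t2, T) × C(Icc t2 t3, T) => glueFn h1 h2 q.1 q.2) := by
  apply ContinuousMap.continuous_of_continuous_uncurry
  simp only [glueFn, ContinuousMap.coe_mk, Function.uncurry]
  refine Continuous.if_le ?_ ?_ (continuous_subtype_val.comp continuous_snd)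
    continuous_const ?_
  · exact continuous_eval.comp
      ((continuous_fst.comp continuous_fst).prodMk
        ((continuous_clamp1 h1).comp continuous_snd))
  · refine Continuous.add ?_ (Continuous.sub ?_ ?_)
    · exact continuous_eval.comp
        ((continuous_snd.comp continuous_fst).prodMk
          ((continuous_clamp2 h2).comp continuous_snd))
    · exact (continuous_eval_const _).comp (continuous_fst.comp continuous_fst)
    · exact (continuous_eval_const _).comp (continuous_snd.comp continuous_fst)
  · intro q hq
    have e1 : clamp1 h1 q.2 = ⟨t2, right_mem_Icc.mpr h1⟩ := Subtype.ext (by simp [clamp1, hq])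
    have e2 : clamp2 h2 q.2 = ⟨t2, left_mem_Icc.mpr h2⟩ := Subtype.ext (by simp [clamp2, hq])
    rw [e1, e2]
    abel

lemma restr1_glueFn (x₁ : C(Icc t1 t2, T)) (x₂ : C(Icc t2 t3, T)) :
    restrMap (Icc_subset_Icc le_rfl h2) (glueFn h1 h2 x₁ x₂) = x₁ := by
  ext t
  have ht2 : (t : ℝ) ≤ t2 := t.2.2
  have e1 : clamp1 h1 (Set.inclusion (Icc_subset_Icc le_rfl h2) t) = t :=
    Subtype.ext (by simp [clamp1, Set.inclusion, min_eq_left ht2])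
  simp only [restrMap, ContinuousMap.comp_apply, glueFn, ContinuousMap.coe_mk,
    ContinuousMap.coe_mk]
  rw [if_pos]
  · rw [e1]
  · exact ht2

lemma restr2_glueFn (x₁ : C(Icc t1 t2, T)) (x₂ : C(Icc t2 t3, T))
    (hmatch : x₁ ⟨t2, right_mem_Icc.mpr h1⟩ = x₂ ⟨t2, left_mem_Icc.mpr h2⟩) :
    restrMap (Icc_subset_Icc h1 le_rfl) (glueFn h1 h2 x₁ x₂) = x₂ := by
  ext t
  have ht2 : t2 ≤ (t : ℝ) := t.2.1
  simp only [restrMap, ContinuousMap.comp_apply, glueFn, ContinuousMap.coe_mk]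
  by_cases h : ((t : ℝ) ≤ t2)
  · have htt : (t : ℝ) = t2 := le_antisymm h ht2
    rw [if_pos h]
    have e1 : clamp1 h1 (Set.inclusion (Icc_subset_Icc h1 le_rfl) t)
        = ⟨t2, right_mem_Icc.mpr h1⟩ := Subtype.ext (by simp [clamp1, Set.inclusion, htt])
    have e2 : t = (⟨t2, left_mem_Icc.mpr h2⟩ : Icc t2 t3) := Subtype.ext htt
    rw [e1, hmatch, ← e2]
  · rw [if_neg h]
    have e2 : clamp2 h2 (Set.inclusion (Icc_subset_Icc h1 le_rfl) t) = t :=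
      Subtype.ext (by simp [clamp2, Set.inclusion, max_eq_left ht2])
    rw [e2, hmatch]
    abel

end Glue
/-- Given `t¹ < t² < t³` and Borel probabilities `ν₁` on
`C([t¹,t²];𝕋^d) × U` and `ν₂` on `C([t²,t³];𝕋^d) × U` whose pushforwards under
`(x(·),u) ↦ (x(t²),u)` coincide, the concatenation `ν₁⊙ν₂` is a well-defined Borel
probability on `C([t¹,t³];𝕋^d) × U`: there is a probability `ν` whose restrictions to the
two subintervals push forward to `ν₁` and `ν₂`, and whose pushforward under
`(x(·),u) ↦ (x(t),u)` equals that of `ν₁` for `t ∈ [t¹,t²]` and that of `ν₂` for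
`t ∈ [t²,t³]`. -/
theorem stmt15 {d : ℕ} {U : Type*} [MetricSpace U] [CompactSpace U]
    [MeasurableSpace U] [BorelSpace U]
    (t1 t2 t3 : ℝ) (h12 : t1 < t2) (h23 : t2 < t3)
    (ν₁ : Measure (C(Set.Icc t1 t2, Torus d) × U)) [IsProbabilityMeasure ν₁]
    (ν₂ : Measure (C(Set.Icc t2 t3, Torus d) × U)) [IsProbabilityMeasure ν₂]
    (hmatch :
      ν₁.map (fun p => (p.1 ⟨t2, Set.right_mem_Icc.mpr h12.le⟩, p.2)) =
      ν₂.map (fun p => (p.1 ⟨t2, Set.left_mem_Icc.mpr h23.le⟩, p.2))) :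
    ∃ ν : Measure (C(Set.Icc t1 t3, Torus d) × U),
      IsProbabilityMeasure ν ∧
      ν.map (fun p => (restrMap (Set.Icc_subset_Icc le_rfl h23.le) p.1, p.2)) = ν₁ ∧
      ν.map (fun p => (restrMap (Set.Icc_subset_Icc h12.le le_rfl) p.1, p.2)) = ν₂ ∧
      (∀ t (ht : t ∈ Set.Icc t1 t2),
        ν.map (fun p => (p.1 ⟨t, Set.Icc_subset_Icc le_rfl h23.le ht⟩, p.2)) =
          ν₁.map (fun p => (p.1 ⟨t, ht⟩, p.2))) ∧
      (∀ t (ht : t ∈ Set.Icc t2 t3),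
        ν.map (fun p => (p.1 ⟨t, Set.Icc_subset_Icc h12.le le_rfl ht⟩, p.2)) =
          ν₂.map (fun p => (p.1 ⟨t, ht⟩, p.2))) := by
  classical
  haveI hU : Nonempty U := by
    by_contra h
    rw [not_nonempty_iff] at h
    have h1 := measure_univ (μ := ν₁)
    rw [Set.univ_eq_empty_iff.mpr inferInstance] at h1
    simp at h1
  haveI : Nonempty (Torus d) := ⟨0⟩
  haveI : Nonempty (C(Set.Icc t2 t3, Torus d) × U) :=
    ⟨(ContinuousMap.const _ (0 : Torus d), Classical.arbitrary U)⟩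
  haveI : PolishSpace C(Set.Icc t2 t3, Torus d) := { toSecondCountableTopology := inferInstance, toIsCompletelyMetrizableSpace := @TopologicalSpace.IsCompletelyMetrizableSpace.of_completeSpace_metrizable _ ContinuousMap.compactConvergenceUniformSpace _ _ _ }
  haveI : StandardBorelSpace (C(Set.Icc t2 t3, Torus d) × U) := inferInstance
  set C1 := C(Set.Icc t1 t2, Torus d)
  set C2 := C(Set.Icc t2 t3, Torus d)
  set C3 := C(Set.Icc t1 t3, Torus d)
  set pt12 : Set.Icc t1 t2 := ⟨t2, Set.right_mem_Icc.mpr h12.le⟩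
  set pt23 : Set.Icc t2 t3 := ⟨t2, Set.left_mem_Icc.mpr h23.le⟩
  set e₁ : C1 × U → (Torus d) × U := fun p => (p.1 pt12, p.2) with he₁def
  set e₂ : C2 × U → (Torus d) × U := fun p => (p.1 pt23, p.2) with he₂def
  have he₁c : Continuous e₁ :=
    ((continuous_eval_const pt12).comp continuous_fst).prodMk continuous_snd
  have he₂c : Continuous e₂ :=
    ((continuous_eval_const pt23).comp continuous_fst).prodMk continuous_snd
  have he₁ : Measurable e₁ := he₁c.measurable
  have he₂ : Measurable e₂ := he₂c.measurable
  set μ : Measure ((Torus d) × U) := ν₁.map e₁ with hμdef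
  haveI : IsProbabilityMeasure μ := Measure.isProbabilityMeasure_map he₁.aemeasurable
  set gr : C2 × U → ((Torus d) × U) × (C2 × U) := fun p => (e₂ p, p) with hgrdef
  have hgr : Measurable gr := he₂.prodMk measurable_id
  set ρ : Measure (((Torus d) × U) × (C2 × U)) := ν₂.map gr with hρdef
  haveI : IsProbabilityMeasure ρ := Measure.isProbabilityMeasure_map hgr.aemeasurable
  have hρfst : ρ.fst = μ := by
    rw [Measure.fst, hρdef, Measure.map_map measurable_fst hgr]
    exact hmatch.symm
  set κ := ρ.condKernel with hκdef
  have hdis : μ ⊗ₘ κ = ρ := by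
    rw [← hρfst]; exact ρ.disintegrate _
  set κ' := κ.comap e₁ he₁ with hκ'def
  haveI : IsMarkovKernel κ' := by
    refine ⟨fun p => ?_⟩
    rw [hκ'def, ProbabilityTheory.Kernel.comap_apply]
    infer_instance
  set γ : Measure ((C1 × U) × (C2 × U)) := ν₁ ⊗ₘ κ' with hγdef
  haveI : IsProbabilityMeasure γ := by rw [hγdef]; infer_instance
  set g : (C1 × U) × (C2 × U) → C3 × U :=
    fun q => (glueFn h12.le h23.le q.1.1 q.2.1, q.1.2) with hgdef
  have hgc : Continuous g := by
    refine Continuous.prodMk ?_ (continuous_fst.snd)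
    exact (continuous_glueFn h12.le h23.le).comp
      ((continuous_fst.fst).prodMk (continuous_snd.fst))
  have hg : Measurable g := hgc.measurable
  set ν : Measure (C3 × U) := γ.map g with hνdef
  haveI : IsProbabilityMeasure ν := Measure.isProbabilityMeasure_map hg.aemeasurable
  set r₁ : C3 × U → C1 × U :=
    fun p => (restrMap (Set.Icc_subset_Icc le_rfl h23.le) p.1, p.2) with hr₁def
  set r₂ : C3 × U → C2 × U :=
    fun p => (restrMap (Set.Icc_subset_Icc h12.le le_rfl) p.1, p.2) with hr₂def
  have hr₁c : Continuous r₁ :=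
    ((ContinuousMap.continuous_precomp _).comp continuous_fst).prodMk continuous_snd
  have hr₂c : Continuous r₂ :=
    ((ContinuousMap.continuous_precomp _).comp continuous_fst).prodMk continuous_snd
  have hr₁ : Measurable r₁ := hr₁c.measurable
  have hr₂ : Measurable r₂ := hr₂c.measurable
  -- restriction to the first interval
  have hr₁g : r₁ ∘ g = Prod.fst := by
    funext q
    exact Prod.ext (restr1_glueFn h12.le h23.le q.1.1 q.2.1) rfl
  have hmap1 : ν.map r₁ = ν₁ := by
    rw [hνdef, Measure.map_map hr₁ hg, hr₁g]
    exact Measure.fst_compProd ν₁ κ'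
  -- the matching set
  set s : Set ((C1 × U) × (C2 × U)) := {q | e₂ q.2 = e₁ q.1} with hsdef
  have hsm : MeasurableSet s :=
    ((he₂.comp measurable_snd).prodMk (he₁.comp measurable_fst))
      isClosed_diagonal.measurableSet
  set s' : Set (((Torus d) × U) × (C2 × U)) := {z | e₂ z.2 = z.1} with hs'def
  have hs'm : MeasurableSet s' :=
    ((he₂.comp measurable_snd).prodMk measurable_fst)
      isClosed_diagonal.measurableSet
  have hρs' : ρ s' = 1 := by
    rw [hρdef, Measure.map_apply hgr hs'm]
    have : gr ⁻¹' s' = Set.univ := by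
      ext p; simp [hgrdef, hs'def]
    rw [this, measure_univ]
  -- the conditional kernel is a.e. concentrated on the fiber
  set f : (Torus d) × U → ENNReal := fun z => κ z (Prod.mk z ⁻¹' s') with hfdef
  have hf : Measurable f := ProbabilityTheory.Kernel.measurable_kernel_prodMk_left hs'm
  have hf1 : ∀ z, f z ≤ 1 := fun z => prob_le_one
  have hint : ∫⁻ z, f z ∂μ = 1 := by
    rw [← Measure.compProd_apply hs'm, hdis, hρs']
  have hae : ∀ᵐ z ∂μ, f z = 1 := by
    have h0 : ∫⁻ z, (1 - f z) ∂μ = 0 := by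
      rw [lintegral_sub hf (by rw [hint]; exact ENNReal.one_ne_top) (ae_of_all _ hf1), hint,
        lintegral_one, measure_univ, tsub_self]
    have h1 := (lintegral_eq_zero_iff (measurable_const.sub hf)).mp h0
    filter_upwards [h1] with z hz
    have : (1 : ENNReal) ≤ f z := by
      simpa [tsub_eq_zero_iff_le] using hz
    exact le_antisymm (hf1 z) this
  have hγs : γ s = 1 := by
    rw [hγdef, Measure.compProd_apply hsm]
    have hint' : ∀ p : C1 × U, κ' p (Prod.mk p ⁻¹' s) = f (e₁ p) := by
      intro p
      rw [hκ'def, ProbabilityTheory.Kernel.comap_apply]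
      rfl
    simp_rw [hint']
    rw [← lintegral_map hf he₁, ← hμdef, lintegral_congr_ae hae, lintegral_one, measure_univ]
  -- restriction to the second interval
  have haes : ∀ᵐ q ∂γ, q ∈ s := by
    rw [ae_iff]
    have : {q | ¬ q ∈ s} = sᶜ := rfl
    rw [this, measure_compl hsm (measure_ne_top _ _), hγs, measure_univ, tsub_self]
  have hae2 : (r₂ ∘ g) =ᵐ[γ] Prod.snd := by
    filter_upwards [haes] with q hq
    have hq' : (q.2.1 pt23, q.2.2) = (q.1.1 pt12, q.1.2) := hq
    have h1 : q.1.1 pt12 = q.2.1 pt23 := (congrArg Prod.fst hq').symm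
    have h2 : q.1.2 = q.2.2 := (congrArg Prod.snd hq').symm
    show (restrMap _ (glueFn h12.le h23.le q.1.1 q.2.1), q.1.2) = q.2
    rw [restr2_glueFn h12.le h23.le q.1.1 q.2.1 h1, h2]
  have hsnd : γ.map Prod.snd = ν₂ := by
    ext s0 hs0
    rw [Measure.map_apply measurable_snd hs0, hγdef,
      Measure.compProd_apply (measurable_snd hs0)]
    have hpre : ∀ p : C1 × U, κ' p (Prod.mk p ⁻¹' (Prod.snd ⁻¹' s0)) = κ (e₁ p) s0 := by
      intro p
      rw [hκ'def, ProbabilityTheory.Kernel.comap_apply]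
      rfl
    simp_rw [hpre]
    rw [← lintegral_map (κ.measurable_coe hs0) he₁, ← hμdef]
    have : ∫⁻ z, κ z s0 ∂μ = (μ ⊗ₘ κ) (Prod.snd ⁻¹' s0) := by
      rw [Measure.compProd_apply (measurable_snd hs0)]
      rfl
    rw [this, hdis, hρdef, Measure.map_apply hgr (measurable_snd hs0)]
    rfl
  have hmap2 : ν.map r₂ = ν₂ := by
    rw [hνdef, Measure.map_map hr₂ hg, Measure.map_congr hae2, hsnd]
  refine ⟨ν, inferInstance, hmap1, hmap2, ?_, ?_⟩
  · intro t ht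
    have het : Measurable (fun p : C1 × U => (p.1 ⟨t, ht⟩, p.2)) :=
      (((continuous_eval_const _).comp continuous_fst).prodMk
        continuous_snd).measurable
    have h := Measure.map_map het hr₁ (μ := ν)
    rw [hmap1] at h
    exact h.symm
  · intro t ht
    have het : Measurable (fun p : C2 × U => (p.1 ⟨t, ht⟩, p.2)) :=
      (((continuous_eval_const _).comp continuous_fst).prodMk
        continuous_snd).measurable
    have h := Measure.map_map het hr₂ (μ := ν)
    rw [hmap2] at h
    exact h.symm
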